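/- Let t be a positive integer and let G be a finite simple graph with component max-leaf at most t. Then for every nonempty vertex set S ⊆ V(G) such that the induced subgraph G[S] is connected, the neighborhood N_G(S) has at most t vertices. -/

import Mathlib

open SimpleGraph

/-- `T` has at most `t` leaves, a leaf being a vertex of degree 1. -/
def LeafCountLE {α : Type*} (T : SimpleGraph α) (t : ℕ) : Prop :=
  {v : α | (T.neighborSet v).ncard = 1}.ncard ≤ t

/-- Every spanning tree of `H` has at most `t` leaves. -/
def MaxLeafLE {α : Type*} (H : SimpleGraph α) (t : ℕ) : Prop :=
  ∀ T : SimpleGraph α, T ≤ H → T.IsTree → LeafCountLE T t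

/-- `G` has component max-leaf at most `t`: every spanning tree of (the graph induced on)
every connected component of `G` has at most `t` leaves. -/
def CompMaxLeafLE {V : Type*} (G : SimpleGraph V) (t : ℕ) : Prop :=
  ∀ C : G.ConnectedComponent, MaxLeafLE (G.induce C.supp) t

/-- The (open, external) neighborhood `N_G(S)`: vertices outside `S` with a neighbor in `S`. -/
def extNeighborSet {V : Type*} (G : SimpleGraph V) (S : Set V) : Set V :=
  {v : V | v ∉ S ∧ ∃ u ∈ S, G.Adj u v}

namespace StmtAux

variable {W : Type*}

/-- The leaf set of a graph. -/
def leaves (T : SimpleGraph W) : Set W := {v : W | (T.neighborSet v).ncard = 1}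

/-- `T` is a "partial spanning tree" of `H` on vertex set `B`. -/
def Good (H T : SimpleGraph W) (B : Set W) : Prop :=
  T ≤ H ∧ (∀ ⦃x y : W⦄, T.Adj x y → x ∈ B ∧ y ∈ B) ∧
    (∀ x ∈ B, ∀ y ∈ B, T.Reachable x y) ∧ T.IsAcyclic

lemma neighborSet_eq_empty_of_good {H T : SimpleGraph W} {B : Set W}
    (hgood : Good H T B) {v : W} (hv : v ∉ B) : T.neighborSet v = ∅ := by
  ext y
  simp only [mem_neighborSet, Set.mem_empty_iff_false, iff_false]
  intro h
  exact hv (hgood.2.1 h).1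

lemma not_adj_of_neighborSet_empty {T : SimpleGraph W} {v : W}
    (hv : T.neighborSet v = ∅) (y : W) : ¬ T.Adj v y := by
  intro h
  have : y ∈ T.neighborSet v := h
  simp [hv] at this

lemma neighborSet_sup_edge_self {T : SimpleGraph W} {u v : W}
    (hv : T.neighborSet v = ∅) (huv : u ≠ v) :
    (T ⊔ edge u v).neighborSet v = {u} := by
  ext y
  simp only [mem_neighborSet, sup_adj, Set.mem_singleton_iff]
  constructor
  · intro h
    rcases h with h | h
    · exact absurd h (not_adj_of_neighborSet_empty hv y)
    · rw [edge_adj] at h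
      rcases h with ⟨⟨h1, h2⟩ | ⟨h1, h2⟩, hne⟩
      · exact absurd h1.symm huv
      · exact h2
  · rintro rfl
    exact Or.inr (by rw [edge_adj]; exact ⟨Or.inr ⟨rfl, rfl⟩, huv.symm⟩)

lemma neighborSet_sup_edge_other {T : SimpleGraph W} {u v x : W}
    (hxu : x ≠ u) (hxv : x ≠ v) :
    (T ⊔ edge u v).neighborSet x = T.neighborSet x := by
  ext y
  simp only [mem_neighborSet, sup_adj]
  constructor
  · intro h
    rcases h with h | h
    · exact h
    · rw [edge_adj] at h
      rcases h with ⟨⟨h1, h2⟩ | ⟨h1, h2⟩, hne⟩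
      · exact absurd h1 hxu
      · exact absurd h1 hxv
  · exact fun h => Or.inl h

lemma isAcyclic_sup_edge {T : SimpleGraph W} {u v : W} (hT : T.IsAcyclic)
    (hv : T.neighborSet v = ∅) (huv : u ≠ v) : (T ⊔ edge u v).IsAcyclic := by
  classical
  set T₁ := T ⊔ edge u v with hT₁
  have hnbr : T₁.neighborSet v = {u} := neighborSet_sup_edge_self hv huv
  -- no cycle visits `v`:
  have hnov : ∀ (c : T₁.Walk v v), ¬ c.IsCycle := by
    intro c hc
    cases c with
    | nil => simp [Walk.isCycle_def] at hc
    | @cons _ x _ hadj p =>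
      have hx : x = u := by
        have : x ∈ T₁.neighborSet v := hadj
        rwa [hnbr, Set.mem_singleton_iff] at this
      obtain ⟨y, hadj2, q, hq⟩ := Walk.exists_eq_cons_of_ne hadj.ne p.reverse
      have hy : y = x := by
        have : y ∈ T₁.neighborSet v := hadj2
        rw [hnbr, Set.mem_singleton_iff] at this
        rw [this, hx]
      have hmem : s(v, y) ∈ p.reverse.edges := by
        rw [hq]; simp
      rw [hy] at hmem
      rw [Walk.edges_reverse, List.mem_reverse] at hmem
      have hnodup := hc.edges_nodup
      rw [Walk.edges_cons, List.nodup_cons] at hnodup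
      exact hnodup.1 hmem
  intro a c hc
  by_cases hvc : v ∈ c.support
  · exact hnov (c.rotate v hvc) (hc.rotate hvc)
  · -- transfer the cycle to `T`
    have hedges : ∀ e ∈ c.edges, e ∈ T.edgeSet := by
      intro e he
      have he' : e ∈ T₁.edgeSet := c.edges_subset_edgeSet he
      rw [hT₁, edgeSet_sup] at he'
      rcases he' with h | h
      · exact h
      · exfalso
        have : e = s(u, v) := by
          have := edgeSet_fromEdgeSet ({s(u, v)} : Set (Sym2 W))
          rw [edge] at h
          rw [this] at h
          exact h.1
        subst this
        exact hvc (Walk.snd_mem_support_of_mem_edges c he)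
    exact hT _ (hc.transfer hedges)

variable [Fintype W]

lemma leaves_le_sup_edge {H T : SimpleGraph W} {B : Set W} {u v : W}
    (hgood : Good H T B) (hu : u ∈ B) (hv : v ∉ B) :
    (leaves T).ncard ≤ (leaves (T ⊔ edge u v)).ncard := by
  have huv : u ≠ v := fun h => hv (h ▸ hu)
  have hvempty : T.neighborSet v = ∅ := neighborSet_eq_empty_of_good hgood hv
  have hvnotleaf : v ∉ leaves T := by
    intro h
    have h' : (T.neighborSet v).ncard = 1 := h
    rw [hvempty, Set.ncard_empty] at h'
    exact one_ne_zero h'.symm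
  have hsub : insert v (leaves T \ {u}) ⊆ leaves (T ⊔ edge u v) := by
    intro x hx0
    rcases Set.mem_insert_iff.mp hx0 with hxeq | ⟨hx, hxu⟩
    · show ((T ⊔ edge u v).neighborSet x).ncard = 1
      rw [hxeq, neighborSet_sup_edge_self hvempty huv, Set.ncard_singleton]
    · have hxu' : x ≠ u := hxu
      have hxv : x ≠ v := fun h => hvnotleaf (h ▸ hx)
      show ((T ⊔ edge u v).neighborSet x).ncard = 1
      rw [neighborSet_sup_edge_other hxu' hxv]
      exact hx
  have h1 : (leaves T).ncard ≤ (leaves T \ {u}).ncard + 1 := by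
    have : leaves T ⊆ insert u (leaves T \ {u}) := by
      intro x hx
      by_cases hxu : x = u
      · exact Or.inl hxu
      · exact Or.inr ⟨hx, hxu⟩
    exact (Set.ncard_le_ncard this (Set.toFinite _)).trans (Set.ncard_insert_le _ _)
  have h2 : (insert v (leaves T \ {u})).ncard = (leaves T \ {u}).ncard + 1 :=
    Set.ncard_insert_of_notMem (fun h => hvnotleaf h.1) (Set.toFinite _)
  calc (leaves T).ncard ≤ (leaves T \ {u}).ncard + 1 := h1
    _ = (insert v (leaves T \ {u})).ncard := h2.symm
    _ ≤ (leaves (T ⊔ edge u v)).ncard := Set.ncard_le_ncard hsub (Set.toFinite _)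

lemma good_sup_edge {H T : SimpleGraph W} {B : Set W} {u v : W}
    (hgood : Good H T B) (hu : u ∈ B) (hv : v ∉ B) (hadj : H.Adj u v) :
    Good H (T ⊔ edge u v) (insert v B) := by
  have huv : u ≠ v := hadj.ne
  have hvempty : T.neighborSet v = ∅ := neighborSet_eq_empty_of_good hgood hv
  obtain ⟨hle, hsupp, hreach, hacyc⟩ := hgood
  refine ⟨?_, ?_, ?_, isAcyclic_sup_edge hacyc hvempty huv⟩
  · refine sup_le hle ?_
    intro x y hxy
    rw [edge_adj] at hxy
    rcases hxy with ⟨⟨rfl, rfl⟩ | ⟨rfl, rfl⟩, _⟩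
    · exact hadj
    · exact hadj.symm
  · intro x y hxy
    rcases hxy with h | h
    · exact ⟨Set.mem_insert_of_mem _ (hsupp h).1, Set.mem_insert_of_mem _ (hsupp h).2⟩
    · rw [edge_adj] at h
      rcases h with ⟨⟨rfl, rfl⟩ | ⟨rfl, rfl⟩, _⟩
      · exact ⟨Set.mem_insert_of_mem _ hu, Set.mem_insert _ _⟩
      · exact ⟨Set.mem_insert _ _, Set.mem_insert_of_mem _ hu⟩
  · have hadj₁ : (T ⊔ edge u v).Adj u v := Or.inr (by rw [edge_adj]; exact ⟨Or.inl ⟨rfl, rfl⟩, huv⟩)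
    have key : ∀ x ∈ B, (T ⊔ edge u v).Reachable x v := fun x hx =>
      ((hreach x hx u hu).mono le_sup_left).trans hadj₁.reachable
    intro x hx0 y hy0
    rcases Set.mem_insert_iff.mp hx0 with rfl | hx <;>
      rcases Set.mem_insert_iff.mp hy0 with rfl | hy
    · rfl
    · exact (key y hy).symm
    · exact key x hx
    · exact (hreach x hx y hy).mono le_sup_left

/-- grow a good partial tree on `B ⊆ A` to a good partial tree on all of `A`,
without decreasing the number of leaves. -/
lemma grow {H : SimpleGraph W} {A : Set W}
    (hA : ∀ x ∈ A, ∀ y ∈ A, ∃ p : H.Walk x y, ∀ z ∈ p.support, z ∈ A) :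
    ∀ (n : ℕ) (B : Set W) (T : SimpleGraph W), (A \ B).ncard ≤ n → B ⊆ A → B.Nonempty →
      Good H T B → ∃ T', Good H T' A ∧ (leaves T).ncard ≤ (leaves T').ncard := by
  intro n
  induction n with
  | zero =>
    intro B T hcard hBA hBne hgood
    have hAB : A \ B = ∅ := by
      rw [← Set.ncard_eq_zero (Set.toFinite _)]
      omega
    have : A ⊆ B := by
      intro x hx
      by_contra hxB
      exact (Set.eq_empty_iff_forall_notMem.mp hAB x) ⟨hx, hxB⟩
    have hBA' : B = A := hBA.antisymm this
    exact ⟨T, hBA' ▸ hgood, le_rfl⟩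
  | succ n ih =>
    intro B T hcard hBA hBne hgood
    by_cases hAB : A ⊆ B
    · have hBA' : B = A := hBA.antisymm hAB
      exact ⟨T, hBA' ▸ hgood, le_rfl⟩
    · obtain ⟨w, hwA, hwB⟩ := Set.not_subset.mp hAB
      obtain ⟨b, hb⟩ := hBne
      obtain ⟨p, hp⟩ := hA b (hBA hb) w hwA
      obtain ⟨d, hd, hdfst, hdsnd⟩ := p.exists_boundary_dart B hb hwB
      have hdA : d.snd ∈ A := hp _ (Walk.dart_snd_mem_support_of_mem_darts _ hd)
      have hgood' := good_sup_edge hgood hdfst hdsnd d.adj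
      have hleaf := leaves_le_sup_edge hgood hdfst hdsnd
      have hcard' : (A \ insert d.snd B).ncard ≤ n := by
        have hset : A \ insert d.snd B = (A \ B) \ {d.snd} := by
          ext x
          simp only [Set.mem_diff, Set.mem_insert_iff, Set.mem_singleton_iff]
          tauto
        have hmem : d.snd ∈ A \ B := ⟨hdA, hdsnd⟩
        have := Set.ncard_diff_singleton_add_one hmem (Set.toFinite _)
        rw [hset]
        omega
      obtain ⟨T', hT', hleaf'⟩ := ih (insert d.snd B) _ hcard'
        (Set.insert_subset hdA hBA) ⟨b, Set.mem_insert_of_mem _ hb⟩ hgood'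
      exact ⟨T', hT', hleaf.trans hleaf'⟩

/-- The core lemma: if `H` is connected and `A` is internally connected and nonempty,
then `H` has a spanning tree with at least `|N_H(A)|` leaves. -/
lemma core {H : SimpleGraph W} (hH : H.Connected) {A : Set W} (hAne : A.Nonempty)
    (hA : ∀ x ∈ A, ∀ y ∈ A, ∃ p : H.Walk x y, ∀ z ∈ p.support, z ∈ A) :
    ∃ T, T ≤ H ∧ T.IsTree ∧ (extNeighborSet H A).ncard ≤ (leaves T).ncard := by
  classical
  obtain ⟨a, ha⟩ := hAne
  -- a spanning tree of A
  have hbase : Good H ⊥ {a} := by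
    refine ⟨bot_le, ?_, ?_, ?_⟩
    · intro x y h; exact absurd h (by simp)
    · rintro x rfl y rfl; rfl
    · exact isAcyclic_bot
  obtain ⟨TA, hTA, -⟩ := grow hA _ {a} ⊥ le_rfl (Set.singleton_subset_iff.mpr ha)
    ⟨a, rfl⟩ hbase
  -- attach all external neighbors as pendant leaves
  set N := extNeighborSet H A with hN
  have hattach : ∀ F : Set W, F ⊆ N → ∃ T, Good H T (A ∪ F) ∧
      ∀ x ∈ F, (T.neighborSet x).ncard = 1 := by
    intro F hF
    refine Set.Finite.induction_on_subset F (Set.toFinite F) ?_ ?_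
    · exact ⟨TA, by simpa using hTA, by simp⟩
    · rintro c F' hcF hF'F hcF' ⟨T, hT, hleaves⟩
      obtain ⟨hcA, u, huA, hadj⟩ : c ∉ A ∧ ∃ u ∈ A, H.Adj u c := hF hcF
      have hcAF : c ∉ A ∪ F' := by
        rintro (h | h)
        · exact hcA h
        · exact hcF' h
      have hgood' := good_sup_edge hT (Set.mem_union_left _ huA) hcAF hadj
      have hset : insert c (A ∪ F') = A ∪ insert c F' := by
        rw [Set.union_insert]
      refine ⟨T ⊔ edge u c, hset ▸ hgood', ?_⟩
      intro x hx0
      rcases Set.mem_insert_iff.mp hx0 with rfl | hx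
      · rw [neighborSet_sup_edge_self (neighborSet_eq_empty_of_good hT hcAF) hadj.ne,
          Set.ncard_singleton]
      · have hxu : x ≠ u := by
          rintro rfl
          exact ((hF (hF'F hx)).1) huA
        have hxc : x ≠ c := fun h => hcF' (h ▸ hx)
        rw [neighborSet_sup_edge_other hxu hxc]
        exact hleaves x hx
  obtain ⟨T₁, hT₁, hleaves₁⟩ := hattach N Set.Subset.rfl
  -- grow to a spanning tree of the whole graph
  have hAuniv : ∀ x ∈ (Set.univ : Set W), ∀ y ∈ (Set.univ : Set W),
      ∃ p : H.Walk x y, ∀ z ∈ p.support, z ∈ (Set.univ : Set W) := by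
    intro x _ y _
    obtain ⟨p⟩ := hH.preconnected x y
    exact ⟨p, fun z _ => trivial⟩
  obtain ⟨T, hT, hleafT⟩ := grow hAuniv _ (A ∪ N) T₁ le_rfl (Set.subset_univ _)
    ⟨a, Set.mem_union_left _ ha⟩ hT₁
  obtain ⟨hle, -, hreach, hacyc⟩ := hT
  have : Nonempty W := ⟨a⟩
  refine ⟨T, hle, ⟨⟨fun x y => hreach x trivial y trivial⟩, hacyc⟩, ?_⟩
  have hNsub : N ⊆ leaves T₁ := fun x hx => hleaves₁ x hx
  calc N.ncard ≤ (leaves T₁).ncard := Set.ncard_le_ncard hNsub (Set.toFinite _)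
    _ ≤ (leaves T).ncard := hleafT

end StmtAux

theorem stmt0 {V : Type*} [Fintype V] (G : SimpleGraph V) (t : ℕ) (ht : 0 < t)
    (hG : CompMaxLeafLE G t) (S : Set V) (hS : S.Nonempty)
    (hconn : (G.induce S).Connected) :
    (extNeighborSet G S).ncard ≤ t := by
  classical
  obtain ⟨s₀, hs₀⟩ := hS
  set C := G.connectedComponentMk s₀ with hC
  -- the inclusion homomorphism from the induced graph on S
  let f : G.induce S →g G :=
    ⟨Subtype.val, fun {_ _} h => h⟩
  have hreachS : ∀ s ∈ S, G.Reachable s₀ s := by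
    intro s hs
    have := hconn.preconnected ⟨s₀, hs₀⟩ ⟨s, hs⟩
    exact this.map f
  have hSC : S ⊆ C.supp := by
    intro s hs
    show G.connectedComponentMk s = C
    rw [hC]
    exact ConnectedComponent.sound (hreachS s hs).symm
  have hNC : extNeighborSet G S ⊆ C.supp := by
    rintro v ⟨hvS, u, huS, hadj⟩
    show G.connectedComponentMk v = C
    rw [hC]
    exact ConnectedComponent.sound (hadj.reachable.symm.trans (hreachS u huS).symm)
  set H := G.induce C.supp with hH
  -- H is connected
  have hHconn : H.Connected := by
    rw [hH, connected_induce_iff]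
    rw [Subgraph.connected_iff_forall_exists_walk_subgraph]
    constructor
    · exact ⟨s₀, hSC hs₀⟩
    · intro u v hu hv
      have hu' : u ∈ C.supp := hu
      have hv' : v ∈ C.supp := hv
      have hru : G.Reachable u s₀ := ConnectedComponent.exact hu'
      have hrv : G.Reachable v s₀ := ConnectedComponent.exact hv'
      obtain ⟨p⟩ := hru.trans hrv.symm
      refine ⟨p, (p.toSubgraph_le_induce_support).trans (Subgraph.induce_mono_right ?_)⟩
      intro z hz
      have hz' : z ∈ p.support := hz
      have : G.Reachable u z := (p.takeUntil z hz').reachable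
      show G.connectedComponentMk z = C
      exact ConnectedComponent.sound (this.symm.trans (ConnectedComponent.exact hu'))
  -- the preimage of S inside the component
  set A : Set (↥C.supp) := (fun x : ↥C.supp => (x : V)) ⁻¹' S with hA
  have hAne : A.Nonempty := ⟨⟨s₀, hSC hs₀⟩, hs₀⟩
  -- internal connectivity of A within H
  have hAwalks : ∀ x ∈ A, ∀ y ∈ A, ∃ p : H.Walk x y, ∀ z ∈ p.support, z ∈ A := by
    intro x hx y hy
    have hr := hconn.preconnected ⟨(x : V), hx⟩ ⟨(y : V), hy⟩
    -- map walks from G.induce S to H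
    let g : G.induce S →g H :=
      ⟨fun z => ⟨(z : V), hSC z.2⟩, fun {_ _} h => h⟩
    obtain ⟨q⟩ := hr
    have hxeq : g ⟨(x : V), hx⟩ = x := Subtype.ext rfl
    have hyeq : g ⟨(y : V), hy⟩ = y := Subtype.ext rfl
    refine ⟨((q.map g).copy hxeq hyeq), ?_⟩
    intro z hz
    rw [Walk.support_copy, Walk.support_map] at hz
    obtain ⟨w, hw, rfl⟩ := List.mem_map.mp hz
    exact w.2
  obtain ⟨T, hTle, hTtree, hTleaves⟩ := StmtAux.core hHconn hAne hAwalks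
  have hmax := hG C T hTle hTtree
  -- identify the two external neighborhoods
  have himage : Subtype.val '' extNeighborSet H A = extNeighborSet G S := by
    ext v
    constructor
    · rintro ⟨x, ⟨hxA, u, huA, hadj⟩, rfl⟩
      exact ⟨hxA, u, huA, hadj⟩
    · rintro ⟨hvS, u, huS, hadj⟩
      have hvC : v ∈ C.supp := hNC ⟨hvS, u, huS, hadj⟩
      refine ⟨⟨v, hvC⟩, ⟨hvS, ⟨u, hSC huS⟩, huS, hadj⟩, rfl⟩
  have hcard : (extNeighborSet G S).ncard = (extNeighborSet H A).ncard := by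
    rw [← himage]
    exact Set.ncard_image_of_injective _ Subtype.coe_injective
  rw [hcard]
  exact hTleaves.trans hmax
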